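/- For each k ≥ 1, the word α_k is the lexicographically minimal factor of u of length |α_k|, every return word to α_k^{e_k} in u is a Lyndon word, and α_k is unbordered. -/

import Mathlib

open scoped BigOperators ENNReal

namespace PeriodicityComplexity

variable {A : Type*}

/-- The finite word `z` occurs in the infinite word `w` at the (0-based) index `j`,
i.e. `z` occupies positions `j+1, …, j+|z|` of `w`. -/
def OccursAt (w : ℕ → A) (z : List A) (j : ℕ) : Prop :=
  z = List.ofFn (fun t : Fin z.length => w (j + t))

/-- `z` is a (finite) factor of the infinite word `w`. -/
def IsFactor (w : ℕ → A) (z : List A) : Prop := ∃ j, OccursAt w z j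

/-- An infinite word is uniformly recurrent if every factor occurs with bounded gaps. -/
def UniformlyRecurrent (w : ℕ → A) : Prop :=
  ∀ z : List A, IsFactor w z → ∃ N : ℕ, ∀ j : ℕ, ∃ t, j ≤ t ∧ t < j + N ∧ OccursAt w z t

/-- An infinite word is periodic if some `p ≥ 1` is a period of all of it. -/
def Periodic (w : ℕ → A) : Prop := ∃ p : ℕ, 1 ≤ p ∧ ∀ i, w (i + p) = w i

/-- An infinite word is ultimately periodic if some `p ≥ 1` is a period from some point on. -/
def UltimatelyPeriodic (w : ℕ → A) : Prop :=
  ∃ p : ℕ, 1 ≤ p ∧ ∃ N : ℕ, ∀ i, N ≤ i → w (i + p) = w i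

/-- The `e`-fold concatenation `v^e` of a finite word `v`. -/
def wpow (v : List A) (e : ℕ) : List A := (List.replicate e v).flatten

/-- The prefix of length `i` of an infinite word. -/
def wordPrefix (w : ℕ → A) (i : ℕ) : List A := List.ofFn (fun t : Fin i => w t)

/-- `r` is a repetition word at position `i` of the infinite word `w` (`w = uv`, `|u| = i`):
`r` is nonempty, suffix-comparable with `u`, and a prefix of the infinite remainder `v`. -/
def IsRepWordAt (w : ℕ → A) (i : ℕ) (r : List A) : Prop :=
  r ≠ [] ∧ (r <:+ wordPrefix w i ∨ wordPrefix w i <:+ r) ∧ OccursAt w r i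

/-- Local period of an infinite word at position `i`, as an extended nonnegative real
(`⊤` if there is no repetition word at that position). -/
noncomputable def localPeriod (w : ℕ → A) (i : ℕ) : ℝ≥0∞ :=
  sInf ((fun r : List A => (r.length : ℝ≥0∞)) '' {r | IsRepWordAt w i r})

/-- Periodicity complexity `h_w(i) = (1/i) ∑_{j=1}^{i} p_w(j)` of an infinite word. -/
noncomputable def pcomplexity (w : ℕ → A) (i : ℕ) : ℝ≥0∞ :=
  (∑ j ∈ Finset.Icc 1 i, localPeriod w j) / (i : ℝ≥0∞)

/-- `r` is a repetition word at position `i` of the finite word `v` (`v = xy`, `|x| = i`):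
`r` is nonempty, suffix-comparable with `x` and prefix-comparable with `y`. -/
def IsRepWordAtF (v : List A) (i : ℕ) (r : List A) : Prop :=
  r ≠ [] ∧ (r <:+ v.take i ∨ v.take i <:+ r) ∧ (r <+: v.drop i ∨ v.drop i <+: r)

/-- Local period of a finite word at position `i`. -/
noncomputable def localPeriodF (v : List A) (i : ℕ) : ℕ :=
  sInf {n : ℕ | ∃ r : List A, IsRepWordAtF v i r ∧ r.length = n}

/-- Average local period `h(v) = (1/|v|) ∑_{i=1}^{|v|} p_v(i)` of a finite word. -/
noncomputable def hF (v : List A) : ℝ :=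
  (∑ i ∈ Finset.Icc 1 v.length, (localPeriodF v i : ℝ)) / (v.length : ℝ)

/-- An infinite word is of bounded repetition if the exponents of powers of nonempty
words occurring in it are bounded. -/
def BoundedRepetition (w : ℕ → A) : Prop :=
  ∃ E : ℕ, ∀ (v : List A) (e : ℕ), v ≠ [] → IsFactor w (wpow v e) → e ≤ E

/-- `p` is a period of the finite word `z`. -/
def HasPeriodF (z : List A) (p : ℕ) : Prop :=
  ∀ t : ℕ, t + p < z.length → z[t]? = z[t + p]?

/-- The (least) period of a finite word. -/
noncomputable def periodF (z : List A) : ℕ := sInf {p : ℕ | 1 ≤ p ∧ HasPeriodF z p}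

/-- `r` is a return word to `z` in the infinite word `w`: `r` is the factor of `w` between
two consecutive occurrences of `z`. -/
def IsReturnWord (w : ℕ → A) (z r : List A) : Prop :=
  r ≠ [] ∧ ∃ j : ℕ, OccursAt w z j ∧ OccursAt w z (j + r.length) ∧
    (∀ t, j < t → t < j + r.length → ¬ OccursAt w z t) ∧ OccursAt w r j

/-- `l` is the length of some return word to `z` in `w`. -/
def IsReturnLength (w : ℕ → A) (z : List A) (l : ℕ) : Prop :=
  ∃ r : List A, IsReturnWord w z r ∧ r.length = l

/-- The maximal return time of `z` in `w`. -/
noncomputable def maxReturnTime (w : ℕ → A) (z : List A) : ℕ :=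
  sSup {l : ℕ | IsReturnLength w z l}

/-- A finite word is unbordered if no proper nonempty prefix of it is also a suffix. -/
def Unbordered (z : List A) : Prop :=
  ∀ b : List A, b ≠ [] → b.length < z.length → b <+: z → ¬ b <:+ z

/-- A finite word is primitive if it is not a (trivial or nontrivial) power of a word
other than itself. -/
def Primitive (z : List A) : Prop :=
  ∀ (v : List A) (k : ℕ), z = wpow v k → k = 1

/-- A finite word is Lyndon if it is primitive and lexicographically minimal among its
conjugates: `z ≤ yx` for every factorization `z = xy`. -/
def IsLyndon [LinearOrder A] (z : List A) : Prop :=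
  Primitive z ∧ ∀ x y : List A, z = x ++ y → z ≤ y ++ x

end PeriodicityComplexity

open PeriodicityComplexity



set_option linter.unusedSectionVars false

namespace AuxLemmas

variable {A : Type*} [LinearOrder A]

theorem list_lt_iff (x y : List A) : x < y ↔ List.Lex (· < ·) x y := Iff.rfl

theorem lt_append (x t : List A) (ht : t ≠ []) : x < x ++ t := by
  rw [list_lt_iff]
  induction x with
  | nil =>
    cases t with
    | nil => exact absurd rfl ht
    | cons a l => exact List.Lex.nil
  | cons a l ih => exact List.Lex.cons ih

theorem lt_of_firstdiff {x y : List A} {t : ℕ} (hx : t < x.length) (hy : t < y.length)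
    (hagree : x.take t = y.take t) (hlt : x[t] < y[t]) : x < y := by
  rw [list_lt_iff]
  induction t generalizing x y with
  | zero =>
    cases x with
    | nil => simp at hx
    | cons a x' =>
      cases y with
      | nil => simp at hy
      | cons b y' => exact List.Lex.rel (by simpa using hlt)
  | succ t ih =>
    cases x with
    | nil => simp at hx
    | cons a x' =>
      cases y with
      | nil => simp at hy
      | cons b y' =>
        rw [List.take_succ_cons, List.take_succ_cons] at hagree
        obtain ⟨rfl, h2⟩ := by simpa using hagree
        exact List.Lex.cons (ih (by simpa using hx) (by simpa using hy) h2 (by simpa using hlt))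

theorem lt_decomp {x y : List A} (h : x < y) :
    (x.length < y.length ∧ x = y.take x.length) ∨
    ∃ t, ∃ (hx : t < x.length) (hy : t < y.length),
      x.take t = y.take t ∧ x[t]'hx < y[t]'hy := by
  rw [list_lt_iff] at h
  induction h with
  | nil => left; simp
  | @rel a l₁ b l₂ hab => right; exact ⟨0, by simp, by simp, by simp, by simpa using hab⟩
  | @cons a l₁ l₂ h ih =>
    rcases ih with ⟨h1, h2⟩ | ⟨t, h1, h2, h3, h4⟩
    · left
      refine ⟨by simpa using h1, ?_⟩
      simp only [List.length_cons, List.take_succ_cons]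
      exact congrArg (a :: ·) h2
    · right
      exact ⟨t + 1, by simpa using h1, by simpa using h2,
        by simp only [List.take_succ_cons]; exact congrArg (a :: ·) h3, by simpa using h4⟩

/-- first-difference for equal-length lists -/
theorem lt_firstdiff_of_eq_length {x y : List A} (hlen : x.length = y.length) (h : x < y) :
    ∃ t, ∃ (hx : t < x.length) (hy : t < y.length),
      x.take t = y.take t ∧ x[t]'hx < y[t]'hy := by
  rcases lt_decomp h with ⟨h1, _⟩ | h2
  · omega
  · exact h2

theorem exists_firstdiff {p q : List A} (hlen : p.length = q.length) (hne : p ≠ q) :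
    ∃ t, ∃ (h1 : t < p.length) (h2 : t < q.length),
      p.take t = q.take t ∧ p[t]'h1 ≠ q[t]'h2 := by
  rcases lt_trichotomy p q with h | h | h
  · obtain ⟨t, h1, h2, h3, h4⟩ := lt_firstdiff_of_eq_length hlen h
    exact ⟨t, h1, h2, h3, ne_of_lt h4⟩
  · exact absurd h hne
  · obtain ⟨t, h1, h2, h3, h4⟩ := lt_firstdiff_of_eq_length hlen.symm h
    exact ⟨t, h2, h1, h3.symm, (ne_of_lt h4).symm⟩

end AuxLemmas

section Seg

variable {A : Type*} [LinearOrder A] {u : ℕ → A}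

open PeriodicityComplexity

/-- The segment of `u` of length `L` starting at position `j`. -/
def seg (u : ℕ → A) (j L : ℕ) : List A := List.ofFn fun i : Fin L => u (j + i)

@[simp] theorem length_seg (j L : ℕ) : (seg u j L).length = L := List.length_ofFn

theorem getElem_seg {j L i : ℕ} (h : i < (seg u j L).length) : (seg u j L)[i] = u (j + i) := by
  simp [seg]

theorem occursAt_iff_seg {z : List A} {j : ℕ} : OccursAt u z j ↔ z = seg u j z.length :=
  Iff.rfl

theorem occursAt_seg (j L : ℕ) : OccursAt u (seg u j L) j := by
  rw [occursAt_iff_seg]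
  refine List.ext_getElem (by simp) fun n h1 h2 => ?_
  rw [getElem_seg, getElem_seg]

theorem isFactor_seg (j L : ℕ) : IsFactor u (seg u j L) := ⟨j, occursAt_seg j L⟩

theorem getElem_of_occursAt {z : List A} {j : ℕ} (h : OccursAt u z j) {i : ℕ}
    (hi : i < z.length) : z[i] = u (j + i) := by
  rw [occursAt_iff_seg] at h
  rw [List.getElem_of_eq h hi, getElem_seg]

theorem occursAt_of_getElem {z : List A} {j : ℕ}
    (h : ∀ i (hi : i < z.length), z[i] = u (j + i)) : OccursAt u z j := by
  rw [occursAt_iff_seg]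
  refine List.ext_getElem (by simp) fun n h1 h2 => ?_
  rw [getElem_seg, h n h1]

theorem eq_seg_of_occursAt {z : List A} {j : ℕ} (h : OccursAt u z j) : z = seg u j z.length :=
  occursAt_iff_seg.mp h

theorem occursAt_take {z : List A} {j : ℕ} (h : OccursAt u z j) (L : ℕ) :
    OccursAt u (z.take L) j := by
  refine occursAt_of_getElem fun i hi => ?_
  rw [List.getElem_take]
  exact getElem_of_occursAt h (by simp at hi; omega)

theorem occursAt_drop {z : List A} {j : ℕ} (h : OccursAt u z j) (d : ℕ) :
    OccursAt u (z.drop d) (j + d) := by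
  refine occursAt_of_getElem fun i hi => ?_
  rw [List.getElem_drop]
  rw [getElem_of_occursAt h (by simp at hi; omega)]
  ring_nf

theorem seg_take {j L L' : ℕ} (h : L' ≤ L) : (seg u j L).take L' = seg u j L' := by
  refine List.ext_getElem (by simp; omega) fun n h1 h2 => ?_
  rw [List.getElem_take, getElem_seg, getElem_seg]

end Seg

section Wpow

variable {A : Type*} [LinearOrder A]

open PeriodicityComplexity

@[simp] theorem wpow_zero (v : List A) : wpow v 0 = [] := rfl

theorem wpow_succ (v : List A) (e : ℕ) : wpow v (e + 1) = v ++ wpow v e := by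
  simp [wpow, List.replicate_succ]

theorem wpow_one (v : List A) : wpow v 1 = v := by simp [wpow_succ]

@[simp] theorem length_wpow (v : List A) (e : ℕ) : (wpow v e).length = e * v.length := by
  induction e with
  | zero => simp
  | succ e ih => rw [wpow_succ]; simp [ih]; ring

theorem getElem_wpow {v : List A} (hv : v ≠ []) {e t : ℕ} (h : t < (wpow v e).length) :
    (wpow v e)[t] = v[t % v.length]'(Nat.mod_lt _ (List.length_pos_iff.mpr hv)) := by
  induction e generalizing t with
  | zero => simp at h
  | succ e ih =>
    have hn : 0 < v.length := List.length_pos_iff.mpr hv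
    have h' : t < (e + 1) * v.length := by rw [length_wpow] at h; exact h
    have hsm : (e + 1) * v.length = e * v.length + v.length := by ring
    have step : (wpow v (e + 1))[t] =
        (v ++ wpow v e)[t]'(by rw [← wpow_succ]; exact h) :=
      List.getElem_of_eq (wpow_succ v e) h
    rw [step]
    by_cases ht : t < v.length
    · rw [List.getElem_append_left ht]
      congr 1
      exact (Nat.mod_eq_of_lt ht).symm
    · push_neg at ht
      have h2 : t - v.length < (wpow v e).length := by rw [length_wpow]; omega
      rw [List.getElem_append_right ht, ih h2]
      congr 1
      rw [Nat.mod_eq_sub_mod ht]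

end Wpow




section Main

variable {A : Type*} [LinearOrder A] {u : ℕ → A} {v : List A}

open PeriodicityComplexity AuxLemmas

theorem take_eq_take_of_getElem {x y : List A} {t : ℕ} (hx : t ≤ x.length) (hy : t ≤ y.length)
    (h : ∀ i (hi : i < t), x[i]'(lt_of_lt_of_le hi hx) = y[i]'(lt_of_lt_of_le hi hy)) :
    x.take t = y.take t := by
  refine List.ext_getElem (by simp; omega) fun n h1 h2 => ?_
  simp only [List.getElem_take]
  exact h n (by simp at h1; omega)

theorem getElem_eq_of_take_eq {x y : List A} {t : ℕ} (h : x.take t = y.take t)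
    {i : ℕ} (hi : i < t) (hx : i < x.length) (hy : i < y.length) : x[i] = y[i] := by
  have h2 := List.getElem_of_eq h (i := i) (by simp; omega)
  simpa [List.getElem_take] using h2

/-- `v` is lexicographically minimal among factors of `u` of its own length. -/
def LexMin (u : ℕ → A) (v : List A) : Prop :=
  ∀ g : List A, IsFactor u g → g.length = v.length → v ≤ g

/-- Any list whose letters follow the periodic pattern of `v` is `≤` every
segment of `u` of the same length, provided `v` is a lex-minimal factor. -/
theorem le_seg_of_powlike (hv : v ≠ []) (hmin : LexMin u v) {P : List A} {j : ℕ}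
    (hgp : ∀ i (h : i < P.length),
      P[i] = v[i % v.length]'(Nat.mod_lt _ (List.length_pos_iff.mpr hv))) :
    P ≤ seg u j P.length := by
  by_contra hcon
  have hlt : seg u j P.length < P := not_le.mp hcon
  obtain ⟨t, h1, h2, h3, h4⟩ := lt_firstdiff_of_eq_length (by simp) hlt
  set n := v.length with hn
  have hn0 : 0 < n := List.length_pos_iff.mpr hv
  set q := t / n with hqdef
  set s := t % n with hsdef
  have hqs : n * q + s = t := Nat.div_add_mod t n
  have hs : s < n := Nat.mod_lt _ hn0
  -- agreement below t
  have hagree : ∀ i (hi : i < t), u (j + i) = P[i]'(lt_trans hi h2) := by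
    intro i hi
    have := getElem_eq_of_take_eq h3 hi (by simpa using lt_trans hi h1) (lt_trans hi h2)
    rw [← this, getElem_seg]
  -- the bad block
  have hglen : (seg u (j + n * q) n).length = n := by simp
  have hgv : seg u (j + n * q) n < v := by
    refine lt_of_firstdiff (t := s) (by omega) (by omega) ?_ ?_
    · refine take_eq_take_of_getElem (by omega) (by omega) fun i hi => ?_
      have e1 : (seg u (j + n * q) n)[i]'(by omega) = u (j + (n * q + i)) := by
        rw [getElem_seg]; congr 1; omega
      rw [e1, hagree (n * q + i) (by omega), hgp (n * q + i) (by omega)]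
      congr 1
      rw [Nat.mul_add_mod]
      exact Nat.mod_eq_of_lt (by omega)
    · have e1 : (seg u (j + n * q) n)[s]'(by omega) = u (j + t) := by
        rw [getElem_seg]; congr 1; omega
      rw [e1]
      have e2 : P[t]'h2 = v[s]'(by omega) := hgp t h2
      rw [← e2]
      have e3 : (seg u j P.length)[t]'h1 = u (j + t) := getElem_seg h1
      rw [← e3]
      exact h4
  exact absurd (hmin _ (isFactor_seg _ _) (by omega)) (not_le.mpr hgv)

theorem lexmin_wpow (hv : v ≠ []) (hmin : LexMin u v) (e : ℕ) : LexMin u (wpow v e) := by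
  intro g hg hlen
  obtain ⟨j, hj⟩ := hg
  have hgseg : g = seg u j g.length := eq_seg_of_occursAt hj
  have : wpow v e ≤ seg u j (wpow v e).length :=
    le_seg_of_powlike hv hmin fun i h => getElem_wpow hv h
  rwa [← hlen, ← hgseg] at this

/-- Two occurrences of an unbordered word cannot overlap. -/
theorem no_close_occ (hunb : Unbordered v) {p s : ℕ} (h1 : OccursAt u v p)
    (h2 : OccursAt u v (p + s)) (hs : 0 < s) (hsn : s < v.length) : False := by
  set n := v.length with hn
  have key : v.drop s = v.take (n - s) := by
    refine List.ext_getElem (by simp; omega) fun i hi1 hi2 => ?_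
    rw [List.getElem_drop, List.getElem_take]
    have hi : s + i < n := by simp [hn] at hi1; omega
    have e1 : v[s + i]'hi = u (p + (s + i)) := getElem_of_occursAt h1 hi
    have e2 : v[i]'(by omega) = u ((p + s) + i) := getElem_of_occursAt h2 (by omega)
    rw [e1, e2]
    congr 1
    omega
  have hbne : v.take (n - s) ≠ [] := by
    refine List.length_pos_iff.mp ?_
    simp [hn]
    omega
  exact hunb (v.take (n - s)) hbne (by simp [hn]; omega) (List.take_prefix _ _)
    (key ▸ List.drop_suffix s v)

/-- Occurrences of the maximal power `v^e` are separated by at least its length. -/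
theorem occ_separated (hv : v ≠ []) (hunb : Unbordered v) {e : ℕ} (he : 1 ≤ e)
    (hnf : ¬ IsFactor u (wpow v (e + 1))) {j d : ℕ}
    (h1 : OccursAt u (wpow v e) j) (h2 : OccursAt u (wpow v e) (j + d)) (hd : 0 < d) :
    (wpow v e).length ≤ d := by
  by_contra hcon
  push_neg at hcon
  set n := v.length with hn
  have hn0 : 0 < n := List.length_pos_iff.mpr hv
  have hm : (wpow v e).length = e * n := by simp [hn]
  rw [hm] at hcon
  set q := d / n with hqdef
  set s := d % n with hsdef
  have hqs : n * q + s = d := Nat.div_add_mod d n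
  have hs : s < n := Nat.mod_lt _ hn0
  have hqe : q < e := by
    by_contra hq
    push_neg at hq
    have : e * n ≤ n * q := by
      calc e * n ≤ q * n := Nat.mul_le_mul_right n hq
      _ = n * q := Nat.mul_comm q n
    omega
  -- v occurs at j + n * q
  have hocc1 : OccursAt u v (j + n * q) := by
    refine occursAt_of_getElem fun i hi => ?_
    have hlt : n * q + i < (wpow v e).length := by rw [hm]; calc
      n * q + i < n * q + n := by omega
      _ = (q + 1) * n := by ring
      _ ≤ e * n := Nat.mul_le_mul_right n (by omega)
    have e1 := getElem_of_occursAt h1 hlt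
    rw [getElem_wpow hv hlt] at e1
    have e2 : (n * q + i) % n = i := by
      rw [Nat.mul_add_mod]
      exact Nat.mod_eq_of_lt (by omega)
    rw [show v[i] = v[(n * q + i) % n]'(by rw [e2]; omega) from by congr 1; omega, e1]
    congr 1
    omega
  -- v occurs at j + d
  have hocc2 : OccursAt u v (j + d) := by
    refine occursAt_of_getElem fun i hi => ?_
    have hlt : i < (wpow v e).length := by rw [hm]; calc
      i < n := hi
      _ = 1 * n := (one_mul n).symm
      _ ≤ e * n := Nat.mul_le_mul_right n he
    have e1 := getElem_of_occursAt h2 hlt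
    rw [getElem_wpow hv hlt] at e1
    rw [show v[i] = v[i % n]'(by rw [Nat.mod_eq_of_lt hi]; omega) from by
      congr 1; exact (Nat.mod_eq_of_lt hi).symm, e1]
  by_cases hs0 : 0 < s
  · -- overlap of two occurrences of v
    have : j + d = (j + n * q) + s := by omega
    rw [this] at hocc2
    exact no_close_occ hunb hocc1 hocc2 hs0 hs
  · -- d is a positive multiple of n : v^(e+1) occurs at j
    have hs0' : s = 0 := by omega
    have hq1 : 1 ≤ q := by
      rcases Nat.eq_zero_or_pos q with h | h
      · rw [h, Nat.mul_zero] at hqs; omega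
      · exact h
    have hde : d ≤ (e - 1) * n + 0 := by
      have : q ≤ e - 1 := by omega
      calc d = n * q := by omega
      _ ≤ n * (e - 1) := Nat.mul_le_mul_left n this
      _ = (e - 1) * n + 0 := by ring
    have hdn : n ≤ d := by
      have h5 : n * 1 ≤ n * q := Nat.mul_le_mul_left n hq1
      omega
    apply hnf
    refine ⟨j, occursAt_of_getElem fun t ht => ?_⟩
    have htlen : t < (e + 1) * n := by simpa [hn] using ht
    rw [getElem_wpow hv (by simpa [hn] using ht)]
    by_cases htc : t < e * n
    · have e1 := getElem_of_occursAt h1 (by rw [hm]; exact htc)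
      rw [getElem_wpow hv (by rw [hm]; exact htc)] at e1
      exact e1
    · push_neg at htc
      have h2' : t - d < e * n := by
        have h3 : (e + 1) * n = e * n + n := by ring
        omega
      have hdt : d ≤ t := by
        have h4 : (e - 1) * n + n = e * n := by
          have : e - 1 + 1 = e := by omega
          calc (e - 1) * n + n = (e - 1 + 1) * n := by ring
          _ = e * n := by rw [this]
        omega
      have e1 := getElem_of_occursAt h2 (by rw [hm]; exact h2')
      rw [getElem_wpow hv (by rw [hm]; exact h2')] at e1
      have e2 : (t - d) % n = t % n := by
        conv_rhs => rw [show t = (t - d) + n * q by omega]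
        rw [Nat.add_mul_mod_self_left]
      rw [show u (j + t) = u (j + d + (t - d)) from by congr 1; omega, ← e1]
      congr 1
      exact e2.symm

end Main


section Return

variable {A : Type*} [LinearOrder A] {u : ℕ → A} {v : List A} {e : ℕ}

open PeriodicityComplexity AuxLemmas

theorem wpow_add (v : List A) (a b : ℕ) : wpow v (a + b) = wpow v a ++ wpow v b := by
  induction a with
  | zero => simp
  | succ a ih =>
    rw [show a + 1 + b = (a + b) + 1 from by omega, wpow_succ, ih, wpow_succ,
      List.append_assoc]

theorem getElem_eq_of_prefix {b r : List A} (h : b <+: r) {i : ℕ} (hi : i < b.length) :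
    b[i] = r[i]'(lt_of_lt_of_le hi h.length_le) := by
  rw [List.getElem_of_eq (List.prefix_iff_eq_take.mp h) hi, List.getElem_take]

theorem unbordered_primitive {r : List A} (hne : r ≠ []) (h : Unbordered r) : Primitive r := by
  intro w k hk
  by_contra hk1
  have hw : w ≠ [] := by
    intro hwnil
    apply hne
    have : r.length = 0 := by rw [hk, hwnil, length_wpow]; simp
    exact List.eq_nil_of_length_eq_zero this
  have hw0 : 0 < w.length := List.length_pos_iff.mpr hw
  have hk2 : 2 ≤ k := by
    rcases Nat.lt_or_ge k 2 with h2 | h2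
    · interval_cases k
      · exact absurd (by rw [hk]; rfl) hne
      · exact absurd rfl hk1
    · exact h2
  have hbpre : wpow w (k - 1) <+: r := by
    have : r = wpow w (k - 1) ++ wpow w 1 := by rw [hk, ← wpow_add]; congr 1; omega
    rw [this]; exact List.prefix_append _ _
  have hbsuf : wpow w (k - 1) <:+ r := by
    have : r = wpow w 1 ++ wpow w (k - 1) := by rw [hk, ← wpow_add]; congr 1; omega
    rw [this]; exact List.suffix_append _ _
  have hbne : wpow w (k - 1) ≠ [] := by
    refine List.length_pos_iff.mp ?_
    rw [length_wpow]
    have h1 : 1 ≤ k - 1 := by omega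
    calc 0 < 1 * w.length := by omega
    _ ≤ (k - 1) * w.length := Nat.mul_le_mul_right _ h1
  have hblen : (wpow w (k - 1)).length < r.length := by
    rw [hk, length_wpow, length_wpow]
    exact (Nat.mul_lt_mul_right hw0).mpr (by omega)
  exact h _ hbne hblen hbpre hbsuf

theorem return_prefix (hv : v ≠ []) (hunb : Unbordered v) (he : 1 ≤ e)
    (hnf : ¬ IsFactor u (wpow v (e + 1))) {r : List A} {j : ℕ}
    (h1 : OccursAt u (wpow v e) j) (h2 : OccursAt u (wpow v e) (j + r.length))
    (h4 : OccursAt u r j) (hne : r ≠ []) :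
    (wpow v e).length ≤ r.length ∧ wpow v e = r.take (wpow v e).length := by
  have hmr : (wpow v e).length ≤ r.length :=
    occ_separated hv hunb he hnf h1 h2 (List.length_pos_iff.mpr hne)
  refine ⟨hmr, ?_⟩
  rw [eq_seg_of_occursAt h4, seg_take hmr]
  exact eq_seg_of_occursAt h1

/-- There is a return word to `z` starting at any occurrence of `z`. -/
theorem exists_return_at (hur : UniformlyRecurrent u) {z : List A} {j : ℕ}
    (hz : OccursAt u z j) :
    ∃ r : List A, IsReturnWord u z r ∧ OccursAt u r j := by
  obtain ⟨N, hN⟩ := hur z ⟨j, hz⟩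
  obtain ⟨t0, ht0, _, ht0occ⟩ := hN (j + 1)
  have hSne : {t | j < t ∧ OccursAt u z t}.Nonempty := ⟨t0, by omega, ht0occ⟩
  have hj'mem := Nat.sInf_mem hSne
  set j' := sInf {t | j < t ∧ OccursAt u z t} with hj'
  have hj'min : ∀ t, t < j' → ¬(j < t ∧ OccursAt u z t) := fun t ht =>
    Nat.notMem_of_lt_sInf ht
  obtain ⟨hjj', hj'occ⟩ := hj'mem
  refine ⟨seg u j (j' - j), ⟨?_, j, hz, ?_, ?_, occursAt_seg j _⟩, occursAt_seg j _⟩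
  · exact List.length_pos_iff.mp (by simp; omega)
  · have hlen : j + (seg u j (j' - j)).length = j' := by simp; omega
    rw [hlen]; exact hj'occ
  · intro t hta htb
    simp only [length_seg] at htb
    intro hocc
    exact hj'min t (by omega) ⟨hta, hocc⟩

theorem return_unbordered (hv : v ≠ []) (hunb : Unbordered v) (hmin : LexMin u v)
    (he : 1 ≤ e) (hnf : ¬ IsFactor u (wpow v (e + 1))) {r : List A}
    (hr : IsReturnWord u (wpow v e) r) : Unbordered r := by
  obtain ⟨hne, j, h1, h2, h3, h4⟩ := hr
  have hn0 : 0 < v.length := List.length_pos_iff.mpr hv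
  have hm0 : 0 < (wpow v e).length := by rw [length_wpow]; exact Nat.mul_pos (by omega) hn0
  obtain ⟨hmr, hzpre⟩ := return_prefix hv hunb he hnf h1 h2 h4 hne
  set z := wpow v e with hzdef
  set m := z.length with hmdef
  set L := r.length with hLdef
  have hme : m = e * v.length := by rw [hmdef, hzdef, length_wpow]
  intro b hbne hblen hbpre hbsuf
  have hb0 : 0 < b.length := List.length_pos_iff.mpr hbne
  have hbL : b.length < L := hblen
  have hbocc : OccursAt u b (j + (L - b.length)) := by
    have hd := List.suffix_iff_eq_drop.mp hbsuf
    have h5 := occursAt_drop h4 (r.length - b.length)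
    rw [← hd] at h5
    exact h5
  have hbelem : ∀ i (hi : i < b.length), b[i] = u (j + (L - b.length) + i) :=
    fun i hi => getElem_of_occursAt hbocc hi
  have hzelem : ∀ i (hi : i < m), z[i]'(hi) = r[i]'(lt_of_lt_of_le hi hmr) :=
    fun i hi => by rw [List.getElem_of_eq hzpre hi, List.getElem_take]
  have hzu : ∀ i (hi : i < m), z[i]'(hi) = u (j + i) := fun i hi => getElem_of_occursAt h1 hi
  by_cases hcase : m ≤ b.length
  · -- z occurs strictly inside r : contradiction
    have hocc : OccursAt u z (j + (L - b.length)) := by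
      refine occursAt_of_getElem fun i hi => ?_
      rw [hzelem i hi, ← getElem_eq_of_prefix hbpre (by omega), hbelem i (by omega)]
    exact h3 _ (by omega) (by omega) hocc
  · push_neg at hcase
    set p := j + (L - b.length) with hp
    have hflow : ∀ i (hi : i < b.length), u (p + i) = z[i]'(by omega) := by
      intro i hi
      rw [← hbelem i hi, getElem_eq_of_prefix hbpre hi, ← hzelem i (by omega)]
    have hfhigh : ∀ i (hi2 : b.length ≤ i) (hi : i < m), u (p + i) = z[i - b.length]'(by omega) := by
      intro i hi2 hi
      have hidx : p + i = (j + L) + (i - b.length) := by omega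
      rw [hidx]
      exact (getElem_of_occursAt h2 (by omega)).symm
    have hzf : z ≤ seg u p m := by
      have h5 := lexmin_wpow hv hmin e (seg u p m) (isFactor_seg _ _) (by simp [hme])
      rwa [← hzdef] at h5
    have hzfne : z ≠ seg u p m := by
      intro heq
      have : OccursAt u z p := by rw [heq]; exact occursAt_seg _ _
      exact h3 p (by omega) (by omega) this
    obtain ⟨t, ht1, ht2, ht3, ht4⟩ :=
      lt_firstdiff_of_eq_length (by simp [hmdef]) (lt_of_le_of_ne hzf hzfne)
    have htm : t < m := ht1
    have htb : b.length ≤ t := by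
      by_contra htc
      push_neg at htc
      have h6 := hflow t htc
      rw [getElem_seg] at ht4
      rw [h6] at ht4
      exact lt_irrefl _ ht4
    -- agreement from ht3 : z.take t = (seg u p m).take t
    have hagree : ∀ i (hi : i < t), z[i]'(by omega) = u (p + i) := by
      intro i hi
      have h7 := getElem_eq_of_take_eq ht3 hi (by omega) (by simp; omega)
      rw [h7, getElem_seg]
    -- contradiction with lex-minimality of z.take (m - b.length)
    have hPle : z.take (m - b.length) ≤ seg u (j + b.length) ((z.take (m - b.length)).length) := by
      refine le_seg_of_powlike hv hmin fun i hi => ?_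
      have him : i < m := by simp at hi; omega
      rw [List.getElem_take]
      exact getElem_wpow hv (by rw [length_wpow]; omega)
    have hPlen : (z.take (m - b.length)).length = m - b.length := by simp; omega
    have hQlt : seg u (j + b.length) ((z.take (m - b.length)).length) < z.take (m - b.length) := by
      refine lt_of_firstdiff (t := t - b.length) (by simp [hPlen]; omega) (by rw [hPlen]; omega)
        ?_ ?_
      · refine take_eq_take_of_getElem (by simp [hPlen]; omega) (by rw [hPlen]; omega)
          fun i hi => ?_
        have e1 : (seg u (j + b.length) ((z.take (m - b.length)).length))[i]'(by simp [hPlen]; omega)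
            = u (j + (b.length + i)) := by rw [getElem_seg]; congr 1; omega
        have e2 : u (j + (b.length + i)) = z[b.length + i]'(by omega) := (hzu _ (by omega)).symm
        have e3 : z[b.length + i]'(by omega) = u (p + (b.length + i)) := hagree _ (by omega)
        have e4 : u (p + (b.length + i)) = z[i]'(by omega) := by
          have := hfhigh (b.length + i) (by omega) (by omega)
          rw [this]
          congr 1
          omega
        have e5 : (z.take (m - b.length))[i]'(by rw [hPlen]; omega) = z[i]'(by omega) := by
          rw [List.getElem_take]
        rw [e1, e2, e3, e4, e5]
      · have e1 : (seg u (j + b.length) ((z.take (m - b.length)).length))[t - b.length]'(by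
            simp [hPlen]; omega) = u (j + t) := by rw [getElem_seg]; congr 1; omega
        have e2 : (z.take (m - b.length))[t - b.length]'(by rw [hPlen]; omega)
            = z[t - b.length]'(by omega) := by rw [List.getElem_take]
        rw [e1, e2]
        have e3 : u (j + t) = z[t]'(by omega) := (hzu t (by omega)).symm
        have e4 : z[t - b.length]'(by omega) = u (p + t) := (hfhigh t htb htm).symm
        have e5 : u (p + t) = (seg u p m)[t]'(by simp; omega) := (getElem_seg _).symm
        rw [e3, e4, e5]
        exact ht4
    exact absurd hPle (not_le.mpr hQlt)

theorem return_lyndon (hv : v ≠ []) (hunb : Unbordered v) (hmin : LexMin u v)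
    (he : 1 ≤ e) (hnf : ¬ IsFactor u (wpow v (e + 1))) {r : List A}
    (hr : IsReturnWord u (wpow v e) r) : IsLyndon r := by
  have hrunb : Unbordered r := return_unbordered hv hunb hmin he hnf hr
  obtain ⟨hne, j, h1, h2, h3, h4⟩ := hr
  refine ⟨unbordered_primitive hne hrunb, ?_⟩
  intro x y hxy
  rcases eq_or_ne x [] with rfl | hx
  · simp at hxy
    simp [← hxy]
  rcases eq_or_ne y [] with rfl | hy
  · simp at hxy
    simp [← hxy]
  have hx0 : 0 < x.length := List.length_pos_iff.mpr hx
  have hy0 : 0 < y.length := List.length_pos_iff.mpr hy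
  obtain ⟨hmr, hzpre⟩ := return_prefix hv hunb he hnf h1 h2 h4 hne
  set z := wpow v e with hzdef
  set m := z.length with hmdef
  have hme : m = e * v.length := by rw [hmdef, hzdef, length_wpow]
  have hn0 : 0 < v.length := List.length_pos_iff.mpr hv
  have hm0 : 0 < m := by rw [hme]; exact Nat.mul_pos (by omega) hn0
  have hL : r.length = x.length + y.length := by rw [hxy]; simp
  have hzelem : ∀ i (hi : i < m), z[i]'(hi) = r[i]'(by omega) :=
    fun i hi => by rw [List.getElem_of_eq hzpre hi, List.getElem_take]
  have hrelem : ∀ i (hi : i < r.length), r[i] = u (j + i) := fun i hi =>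
    getElem_of_occursAt h4 hi
  have hydrop : y = r.drop x.length := by rw [hxy, List.drop_left]
  have hyocc : OccursAt u y (j + x.length) := by
    have h5 := occursAt_drop h4 x.length
    rwa [← hydrop] at h5
  have hyelem : ∀ i (hi : i < y.length), y[i] = u (j + x.length + i) := fun i hi =>
    getElem_of_occursAt hyocc hi
  -- y is not a prefix of r (else border)
  have hnotpre : y ≠ r.take y.length := by
    intro hpre
    exact hrunb y hy (by omega) (List.prefix_iff_eq_take.mpr hpre)
      (hydrop ▸ List.drop_suffix x.length r)
  obtain ⟨t, ht1, ht2, ht3, ht4⟩ := exists_firstdiff (p := y) (q := r.take y.length)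
    (by simp; omega) hnotpre
  have hty : t < y.length := ht1
  have htake : y.take t = r.take t := by
    rw [ht3, List.take_take, min_eq_left (le_of_lt hty)]
  have hne3 : y[t]'ht1 ≠ r[t]'(by omega) := by
    intro heq
    apply ht4
    rw [heq, List.getElem_take]
  have hagree : ∀ i (hi : i < t), y[i]'(by omega) = r[i]'(by omega) := fun i hi =>
    getElem_eq_of_take_eq htake hi (by omega) (by omega)
  rcases lt_or_gt_of_ne hne3 with hlt | hgt
  · -- y[t] < r[t] : impossible
    exfalso
    by_cases hcase : m ≤ t
    · -- z occurs strictly inside r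
      have hocc : OccursAt u z (j + x.length) := by
        refine occursAt_of_getElem fun i hi => ?_
        have e1 : z[i]'hi = r[i]'(by omega) := hzelem i hi
        have e2 : r[i]'(by omega) = y[i]'(by omega) := (hagree i (by omega)).symm
        rw [e1, e2, hyelem i (by omega)]
      exact h3 _ (by omega) (by omega) hocc
    · push_neg at hcase
      -- the factor of length m at j + x.length is < z
      have hgfac : z ≤ seg u (j + x.length) m := by
        have h5 := lexmin_wpow hv hmin e (seg u (j + x.length) m) (isFactor_seg _ _)
          (by simp [hme])
        rwa [← hzdef] at h5
      have hglt : seg u (j + x.length) m < z := by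
        refine lt_of_firstdiff (t := t) (by simp; omega) (by omega) ?_ ?_
        · refine take_eq_take_of_getElem (by simp; omega) (by omega) fun i hi => ?_
          have e1 : (seg u (j + x.length) m)[i]'(by simp; omega) = u (j + x.length + i) :=
            getElem_seg _
          rw [e1, ← hyelem i (by omega), hagree i hi, ← hzelem i (by omega)]
        · have e1 : (seg u (j + x.length) m)[t]'(by simp; omega) = u (j + x.length + t) :=
            getElem_seg _
          rw [e1, ← hyelem t (by omega), hzelem t (by omega)]
          exact hlt
      exact absurd hgfac (not_le.mpr hglt)
  · -- r[t] < y[t] : r < y ++ x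
    apply le_of_lt
    refine lt_of_firstdiff (t := t) (by omega) (by simp; omega) ?_ ?_
    · rw [List.take_append_of_le_length (le_of_lt hty)]
      exact htake.symm
    · have e1 : (y ++ x)[t]'(by simp; omega) = y[t]'hty := List.getElem_append_left hty
      rw [e1]
      exact hgt

theorem minreturn_lexmin (hur : UniformlyRecurrent u) (hv : v ≠ []) (hunb : Unbordered v)
    (hmin : LexMin u v) (he : 1 ≤ e) (hnf : ¬ IsFactor u (wpow v (e + 1))) {r0 : List A}
    (hr0 : IsReturnWord u (wpow v e) r0)
    (hmin0 : ∀ r, IsReturnWord u (wpow v e) r → r0 ≤ r) : LexMin u r0 := by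
  obtain ⟨hne0, j0, g1, g2, g3, g4⟩ := hr0
  obtain ⟨hmr0, hzpre⟩ := return_prefix hv hunb he hnf g1 g2 g4 hne0
  set z := wpow v e with hzdef
  set m := z.length with hmdef
  have hme : m = e * v.length := by rw [hmdef, hzdef, length_wpow]
  have hn0 : 0 < v.length := List.length_pos_iff.mpr hv
  have hm0 : 0 < m := by rw [hme]; exact Nat.mul_pos (by omega) hn0
  have hzelem : ∀ i (hi : i < m), z[i]'(hi) = r0[i]'(by omega) :=
    fun i hi => by rw [List.getElem_of_eq hzpre hi, List.getElem_take]
  intro g hgfac hglen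
  obtain ⟨j, hgocc⟩ := hgfac
  by_contra hcon
  have hglt : g < r0 := not_le.mp hcon
  obtain ⟨t, ht1, ht2, ht3, ht4⟩ := lt_firstdiff_of_eq_length hglen hglt
  have hgelem : ∀ i (hi : i < g.length), g[i] = u (j + i) := fun i hi =>
    getElem_of_occursAt hgocc hi
  have hagree : ∀ i (hi : i < t), g[i]'(by omega) = r0[i]'(by omega) := fun i hi =>
    getElem_eq_of_take_eq ht3 hi (by omega) (by omega)
  by_cases hcase : t < m
  · -- contradiction with lex-minimality of z at length m
    have hzle : z ≤ seg u j m := by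
      have h5 := lexmin_wpow hv hmin e (seg u j m) (isFactor_seg _ _) (by simp [hme])
      rwa [← hzdef] at h5
    have hzgt : seg u j m < z := by
      refine lt_of_firstdiff (t := t) (by simp; omega) (by omega) ?_ ?_
      · refine take_eq_take_of_getElem (by simp; omega) (by omega) fun i hi => ?_
        have e1 : (seg u j m)[i]'(by simp; omega) = u (j + i) := getElem_seg _
        rw [e1, ← hgelem i (by omega), hagree i hi, ← hzelem i (by omega)]
      · have e1 : (seg u j m)[t]'(by simp; omega) = u (j + t) := getElem_seg _
        rw [e1, ← hgelem t (by omega), hzelem t (by omega)]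
        exact ht4
    exact absurd hzle (not_le.mpr hzgt)
  · push_neg at hcase
    -- z occurs at j
    have hzj : OccursAt u z j := by
      refine occursAt_of_getElem fun i hi => ?_
      rw [hzelem i hi, ← hagree i (by omega), hgelem i (by omega)]
    obtain ⟨r, hret, hrocc⟩ := exists_return_at hur hzj
    have hle := hmin0 r hret
    have hrelem : ∀ i (hi : i < r.length), r[i] = u (j + i) := fun i hi =>
      getElem_of_occursAt hrocc hi
    by_cases hc2 : t < r.length
    · -- r < r0 contradicts minimality
      have : r < r0 := by
        refine lt_of_firstdiff (t := t) hc2 ht2 ?_ ?_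
        · refine take_eq_take_of_getElem (by omega) (by omega) fun i hi => ?_
          rw [hrelem i (by omega), ← hgelem i (by omega)]
          exact hagree i hi
        · rw [hrelem t hc2, ← hgelem t (by omega)]
          exact ht4
      exact absurd hle (not_le.mpr this)
    · push_neg at hc2
      -- r is a proper prefix of r0, so r < r0
      have hrpre : r = r0.take r.length := by
        refine List.ext_getElem (by simp; omega) fun i hi1 hi2 => ?_
        rw [List.getElem_take, hrelem i hi1, ← hgelem i (by omega)]
        exact hagree i (by omega)
      have hsplit : r0 = r ++ r0.drop r.length := by
        conv_lhs => rw [← List.take_append_drop r.length r0]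
        rw [← hrpre]
      have hdne : r0.drop r.length ≠ [] := by
        refine List.length_pos_iff.mp ?_
        simp
        omega
      have : r < r0 := by
        calc r < r ++ r0.drop r.length := lt_append _ _ hdne
        _ = r0 := hsplit.symm
      exact absurd hle (not_le.mpr this)


end Return

/-- Let `u` be an infinite non-periodic uniformly recurrent word over a
linearly ordered alphabet whose least letter `a` occurs in `u`. Let `α 1 = a`, let `e k` be
the largest integer with `(α k)^(e k)` a factor of `u`, and let `α (k+1)` be the
lexicographically minimal return word to `(α k)^(e k)` in `u`. Then for each `k ≥ 1`,
`α k` is the lexicographically minimal factor of `u` of length `|α k|`, every return word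
to `(α k)^(e k)` is Lyndon, and `α k` is unbordered. -/


theorem alpha_lexMin_return_lyndon_unbordered
    {A : Type*} [LinearOrder A] (a : A) (ha : ∀ b : A, a ≤ b)
    (u : ℕ → A) (hur : UniformlyRecurrent u) (hnp : ¬ Periodic u)
    (hain : IsFactor u [a])
    (α : ℕ → List A) (e : ℕ → ℕ)
    (hα1 : α 1 = [a])
    (he : ∀ k, 1 ≤ k → IsFactor u (wpow (α k) (e k)) ∧ ¬ IsFactor u (wpow (α k) (e k + 1)))
    (hret : ∀ k, 1 ≤ k → IsReturnWord u (wpow (α k) (e k)) (α (k + 1)))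
    (hmin : ∀ k, 1 ≤ k → ∀ r : List A, IsReturnWord u (wpow (α k) (e k)) r → α (k + 1) ≤ r) :
    ∀ k, 1 ≤ k →
      (∀ z : List A, IsFactor u z → z.length = (α k).length → α k ≤ z) ∧
      (∀ r : List A, IsReturnWord u (wpow (α k) (e k)) r → IsLyndon r) ∧
      Unbordered (α k) := by
  have key : ∀ k, 1 ≤ k → IsFactor u (α k) ∧ α k ≠ [] ∧ Unbordered (α k) ∧ LexMin u (α k) := by
    intro k hk
    induction k, hk using Nat.le_induction with
    | base =>
      refine ⟨by rw [hα1]; exact hain, by rw [hα1]; simp, ?_, ?_⟩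
      · intro b hbne hblen _
        rw [hα1] at hblen
        have hb1 : b.length < 1 := by simpa using hblen
        exact absurd (List.eq_nil_of_length_eq_zero (by omega)) hbne
      · intro g hg hlen
        rw [hα1] at hlen ⊢
        simp at hlen
        obtain ⟨b, rfl⟩ := List.length_eq_one_iff.mp hlen
        rcases eq_or_lt_of_le (ha b) with h | h
        · rw [h]
        · exact le_of_lt (List.Lex.rel h)
    | succ k hk ih =>
      obtain ⟨hfac, hne, hunb, hlex⟩ := ih
      obtain ⟨hef, hnf⟩ := he k hk
      have hek : 1 ≤ e k := by
        rcases Nat.eq_zero_or_pos (e k) with h0 | h0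
        · exfalso
          apply hnf
          rw [h0, zero_add, wpow_one]
          exact hfac
        · exact h0
      have hret' := hret k hk
      have hmin' := hmin k hk
      obtain ⟨hne1, j, h1, h2, h3, h4⟩ := hret k hk
      exact ⟨⟨j, h4⟩, hne1, return_unbordered hne hunb hlex hek hnf hret',
        minreturn_lexmin hur hne hunb hlex hek hnf hret' hmin'⟩
  intro k hk
  obtain ⟨hfac, hne, hunb, hlex⟩ := key k hk
  obtain ⟨hef, hnf⟩ := he k hk
  have hek : 1 ≤ e k := by
    rcases Nat.eq_zero_or_pos (e k) with h0 | h0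
    · exfalso
      apply hnf
      rw [h0, zero_add, wpow_one]
      exact hfac
    · exact h0
  exact ⟨hlex, fun r hr => return_lyndon hne hunb hlex hek hnf hr, hunb⟩
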